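/- Let (M,d) be a compact metric space, X ⊂ M compact with at least two points, g : M → X measurable with d(x,g(x)) ≤ ε for all x ∈ M. Then the normalization constants satisfy |ν_{(M,d)} − ν_{(X,d)}| ≤ ε, where ν denotes the supremum over Borel probability measures of the square root of the Fréchet variance. -/

import Mathlib

open MeasureTheory

lemma aux_integrable_of_bdd {Y : Type*} [MeasurableSpace Y] (μ : Measure Y) [IsFiniteMeasure μ]
    {f : Y → ℝ} (hm : AEStronglyMeasurable f μ) {C : ℝ} (hb : ∀ x, ‖f x‖ ≤ C) :
    Integrable f μ :=
  Integrable.mono' (integrable_const C) hm (Filter.Eventually.of_forall hb)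

lemma aux_sqrt_integral_add_sq_le {Y : Type*} [MeasurableSpace Y] (μ : Measure Y)
    [IsProbabilityMeasure μ] {f : Y → ℝ} (hf : Integrable f μ)
    (hf2 : Integrable (fun x => f x ^ 2) μ) (hf0 : ∀ x, 0 ≤ f x) {c : ℝ} (hc : 0 ≤ c) :
    Real.sqrt (∫ x, (f x + c) ^ 2 ∂μ) ≤ Real.sqrt (∫ x, f x ^ 2 ∂μ) + c := by
  set I1 := ∫ x, f x ∂μ with hI1def
  set I2 := ∫ x, f x ^ 2 ∂μ with hI2def
  have hI1 : 0 ≤ I1 := integral_nonneg hf0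
  have hI2 : 0 ≤ I2 := integral_nonneg fun x => sq_nonneg _
  have hvar : 0 ≤ ∫ x, (f x - I1) ^ 2 ∂μ := integral_nonneg fun x => sq_nonneg _
  have hexp : ∫ x, (f x - I1) ^ 2 ∂μ = I2 - I1 ^ 2 := by
    have heq : (fun x => (f x - I1) ^ 2) = fun x => f x ^ 2 + ((-2 * I1) * f x + I1 ^ 2) := by
      funext x; ring
    have ha : Integrable (fun x => -2 * I1 * f x + I1 ^ 2) μ :=
      Integrable.add (hf.const_mul _) (integrable_const _)
    rw [heq, integral_add hf2 ha,
      integral_add (hf.const_mul _) (integrable_const _), integral_const_mul,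
      integral_const, probReal_univ]
    simp only [ENNReal.toReal_one, smul_eq_mul, one_mul]
    ring
  have hI1sq : I1 ^ 2 ≤ I2 := by rw [hexp] at hvar; linarith
  have hI1le : I1 ≤ Real.sqrt I2 := by
    nlinarith [Real.sq_sqrt hI2, Real.sqrt_nonneg I2]
  have hexp2 : ∫ x, (f x + c) ^ 2 ∂μ = I2 + 2 * c * I1 + c ^ 2 := by
    have heq : (fun x => (f x + c) ^ 2) = fun x => f x ^ 2 + ((2 * c) * f x + c ^ 2) := by
      funext x; ring
    have ha : Integrable (fun x => 2 * c * f x + c ^ 2) μ :=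
      Integrable.add (hf.const_mul _) (integrable_const _)
    rw [heq, integral_add hf2 ha,
      integral_add (hf.const_mul _) (integrable_const _), integral_const_mul,
      integral_const, probReal_univ]
    simp only [ENNReal.toReal_one, smul_eq_mul, one_mul]
    ring
  have hle : ∫ x, (f x + c) ^ 2 ∂μ ≤ (Real.sqrt I2 + c) ^ 2 := by
    rw [hexp2]; nlinarith [Real.sq_sqrt hI2]
  calc Real.sqrt (∫ x, (f x + c) ^ 2 ∂μ) ≤ Real.sqrt ((Real.sqrt I2 + c) ^ 2) :=
        Real.sqrt_le_sqrt hle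
    _ = Real.sqrt I2 + c := Real.sqrt_sq (by positivity)

lemma aux_sqrt_int_le {Y : Type*} [MeasurableSpace Y] (μ : Measure Y) [IsProbabilityMeasure μ]
    {f h : Y → ℝ} (hf2 : Integrable (fun x => f x ^ 2) μ) (hh : Integrable h μ)
    (hh2 : Integrable (fun x => h x ^ 2) μ) (hf0 : ∀ x, 0 ≤ f x) (hh0 : ∀ x, 0 ≤ h x)
    {c : ℝ} (hc : 0 ≤ c) (hle : ∀ x, f x ≤ h x + c) :
    Real.sqrt (∫ x, f x ^ 2 ∂μ) ≤ Real.sqrt (∫ x, h x ^ 2 ∂μ) + c := by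
  have hhc2 : Integrable (fun x => (h x + c) ^ 2) μ := by
    have heq : (fun x => (h x + c) ^ 2) = fun x => h x ^ 2 + ((2 * c) * h x + c ^ 2) := by
      funext x; ring
    rw [heq]
    exact hh2.add ((hh.const_mul _).add (integrable_const _))
  have h1 : ∫ x, f x ^ 2 ∂μ ≤ ∫ x, (h x + c) ^ 2 ∂μ :=
    integral_mono hf2 hhc2 fun x => by nlinarith [hf0 x, hh0 x, hle x]
  exact le_trans (Real.sqrt_le_sqrt h1) (aux_sqrt_integral_add_sq_le μ hh hh2 hh0 hc)

lemma aux_sqrt_integral_sq_le {Y : Type*} [MeasurableSpace Y] (μ : Measure Y)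
    [IsProbabilityMeasure μ] {f : Y → ℝ} {C : ℝ} (hC : 0 ≤ C)
    (hf2 : Integrable (fun x => f x ^ 2) μ) (hb : ∀ x, f x ^ 2 ≤ C ^ 2) :
    Real.sqrt (∫ x, f x ^ 2 ∂μ) ≤ C := by
  have h1 : ∫ x, f x ^ 2 ∂μ ≤ C ^ 2 := by
    calc ∫ x, f x ^ 2 ∂μ ≤ ∫ _, (C ^ 2 : ℝ) ∂μ := integral_mono hf2 (integrable_const _) hb
      _ = C ^ 2 := by simp
  calc Real.sqrt (∫ x, f x ^ 2 ∂μ) ≤ Real.sqrt (C ^ 2) := Real.sqrt_le_sqrt h1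
    _ = C := Real.sqrt_sq hC

/-- The synchrony normalization constants of M and of a compact subset X (with at least
two points, and every x ∈ M within ε of g(x) ∈ X) differ by at most ε. -/
theorem norm_const_approximation {M : Type*} [MetricSpace M] [CompactSpace M]
    [MeasurableSpace M] [BorelSpace M]
    (X : Set M) (hX : IsCompact X) (hX2 : ∃ x y : X, x ≠ y)
    (g : M → X) (hg : Measurable g) (ε : ℝ) (hgd : ∀ x : M, dist x (g x : M) ≤ ε) :
    |(⨆ μ : ProbabilityMeasure M,
        ⨅ α : M, Real.sqrt (∫ x, dist x α ^ 2 ∂(μ : Measure M)))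
      - (⨆ μ : ProbabilityMeasure X,
        ⨅ α : X, Real.sqrt (∫ y, dist y α ^ 2 ∂(μ : Measure X)))| ≤ ε := by
  obtain ⟨x0, y0, -⟩ := hX2
  haveI : CompactSpace X := isCompact_iff_compactSpace.mp hX
  haveI : Nonempty X := ⟨x0⟩
  haveI : Nonempty M := ⟨(x0 : M)⟩
  haveI : Nonempty (ProbabilityMeasure M) :=
    ⟨⟨Measure.dirac (x0 : M), Measure.dirac.isProbabilityMeasure⟩⟩
  haveI : Nonempty (ProbabilityMeasure X) :=
    ⟨⟨Measure.dirac x0, Measure.dirac.isProbabilityMeasure⟩⟩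
  have hε : 0 ≤ ε := le_trans dist_nonneg (hgd (x0 : M))
  set Cm := Metric.diam (Set.univ : Set M) with hCmdef
  have hCm0 : 0 ≤ Cm := Metric.diam_nonneg
  have hCm : ∀ y z : M, dist y z ≤ Cm := fun y z =>
    Metric.dist_le_diam_of_mem isCompact_univ.isBounded trivial trivial
  have hCmX : ∀ y z : X, dist y z ≤ Cm := fun y z => by
    rw [Subtype.dist_eq]; exact hCm _ _
  -- integrability of all the distance-squared functions
  have intM : ∀ (μ : Measure M) [IsFiniteMeasure μ] (α : M),
      Integrable (fun x => dist x α ^ 2) μ := fun μ _ α =>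
    aux_integrable_of_bdd μ ((continuous_id.dist continuous_const).pow 2).aestronglyMeasurable
      (C := Cm ^ 2) fun x => by
        rw [Real.norm_eq_abs, abs_of_nonneg (by positivity)]
        exact pow_le_pow_left₀ dist_nonneg (hCm x α) 2
  have intX : ∀ (μ : Measure X) [IsFiniteMeasure μ] (β : X),
      Integrable (fun y => dist y β ^ 2) μ := fun μ _ β =>
    aux_integrable_of_bdd μ ((continuous_id.dist continuous_const).pow 2).aestronglyMeasurable
      (C := Cm ^ 2) fun y => by
        rw [Real.norm_eq_abs, abs_of_nonneg (by positivity)]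
        exact pow_le_pow_left₀ dist_nonneg (hCmX y β) 2
  -- the two suprema
  set SM := ⨆ μ : ProbabilityMeasure M,
      ⨅ α : M, Real.sqrt (∫ x, dist x α ^ 2 ∂(μ : Measure M)) with hSM
  set SX := ⨆ μ : ProbabilityMeasure X,
      ⨅ α : X, Real.sqrt (∫ y, dist y α ^ 2 ∂(μ : Measure X)) with hSX
  have bbM : ∀ μ : ProbabilityMeasure M,
      BddBelow (Set.range fun α : M => Real.sqrt (∫ x, dist x α ^ 2 ∂(μ : Measure M))) :=
    fun μ => ⟨0, by rintro r ⟨α, rfl⟩; exact Real.sqrt_nonneg _⟩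
  have bbX : ∀ μ : ProbabilityMeasure X,
      BddBelow (Set.range fun β : X => Real.sqrt (∫ y, dist y β ^ 2 ∂(μ : Measure X))) :=
    fun μ => ⟨0, by rintro r ⟨β, rfl⟩; exact Real.sqrt_nonneg _⟩
  have bddM : BddAbove (Set.range fun μ : ProbabilityMeasure M =>
      ⨅ α : M, Real.sqrt (∫ x, dist x α ^ 2 ∂(μ : Measure M))) := by
    refine ⟨Cm, ?_⟩
    rintro r ⟨μ, rfl⟩
    refine ciInf_le_of_le (bbM μ) (x0 : M) ?_
    exact aux_sqrt_integral_sq_le _ hCm0 (intM _ _)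
      fun x => pow_le_pow_left₀ dist_nonneg (hCm x _) 2
  have bddX : BddAbove (Set.range fun μ : ProbabilityMeasure X =>
      ⨅ β : X, Real.sqrt (∫ y, dist y β ^ 2 ∂(μ : Measure X))) := by
    refine ⟨Cm, ?_⟩
    rintro r ⟨μ, rfl⟩
    refine ciInf_le_of_le (bbX μ) x0 ?_
    exact aux_sqrt_integral_sq_le _ hCm0 (intX _ _)
      fun y => pow_le_pow_left₀ dist_nonneg (hCmX y _) 2
  -- direction 1 : SM ≤ SX + ε
  have dir1 : SM ≤ SX + ε := by
    rw [hSM]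
    apply ciSup_le
    intro μ
    set ν : ProbabilityMeasure X := μ.map hg.aemeasurable with hνdef
    have hmap : ∀ β : X, ∫ y, dist y β ^ 2 ∂(ν : Measure X)
        = ∫ x, dist (g x) β ^ 2 ∂(μ : Measure M) := by
      intro β
      rw [hνdef, ProbabilityMeasure.toMeasure_map]
      exact integral_map hg.aemeasurable
        ((continuous_id.dist continuous_const).pow 2).aestronglyMeasurable
    have key : ∀ β : X,
        (⨅ α : M, Real.sqrt (∫ x, dist x α ^ 2 ∂(μ : Measure M))) - ε
          ≤ Real.sqrt (∫ y, dist y β ^ 2 ∂(ν : Measure X)) := by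
      intro β
      have h1 : (⨅ α : M, Real.sqrt (∫ x, dist x α ^ 2 ∂(μ : Measure M)))
          ≤ Real.sqrt (∫ x, dist x (β : M) ^ 2 ∂(μ : Measure M)) := ciInf_le (bbM μ) _
      have hgβ : Integrable (fun x => dist (g x) β) (μ : Measure M) :=
        aux_integrable_of_bdd _ (((continuous_id.dist continuous_const).measurable.comp
          hg).aestronglyMeasurable) (C := Cm) fun x => by
            rw [Real.norm_eq_abs, abs_of_nonneg dist_nonneg]; exact hCmX _ _
      have hgβ2 : Integrable (fun x => dist (g x) β ^ 2) (μ : Measure M) :=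
        aux_integrable_of_bdd _ ((((continuous_id.dist continuous_const).measurable.comp
          hg).pow_const 2).aestronglyMeasurable) (C := Cm ^ 2) fun x => by
            rw [Real.norm_eq_abs, abs_of_nonneg (by positivity)]
            exact pow_le_pow_left₀ dist_nonneg (hCmX _ _) 2
      have h2 : Real.sqrt (∫ x, dist x (β : M) ^ 2 ∂(μ : Measure M))
          ≤ Real.sqrt (∫ x, dist (g x) β ^ 2 ∂(μ : Measure M)) + ε := by
        refine aux_sqrt_int_le _ (intM _ _) hgβ hgβ2 (fun x => dist_nonneg)
          (fun x => dist_nonneg) hε fun x => ?_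
        have := dist_triangle x (g x : M) (β : M)
        rw [Subtype.dist_eq]
        linarith [hgd x]
      rw [hmap β]
      linarith
    have h3 : (⨅ α : M, Real.sqrt (∫ x, dist x α ^ 2 ∂(μ : Measure M))) - ε
        ≤ ⨅ β : X, Real.sqrt (∫ y, dist y β ^ 2 ∂(ν : Measure X)) := le_ciInf key
    have h4 : (⨅ β : X, Real.sqrt (∫ y, dist y β ^ 2 ∂(ν : Measure X))) ≤ SX :=
      le_ciSup bddX ν
    linarith
  -- direction 2 : SX ≤ SM + ε
  have dir2 : SX ≤ SM + ε := by
    rw [hSX]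
    apply ciSup_le
    intro μ
    set ν : ProbabilityMeasure M := μ.map measurable_subtype_coe.aemeasurable with hνdef
    have hmap : ∀ α : M, ∫ x, dist x α ^ 2 ∂(ν : Measure M)
        = ∫ y : X, dist (y : M) α ^ 2 ∂(μ : Measure X) := by
      intro α
      rw [hνdef, ProbabilityMeasure.toMeasure_map]
      exact integral_map measurable_subtype_coe.aemeasurable
        ((continuous_id.dist continuous_const).pow 2).aestronglyMeasurable
    have key : ∀ α : M,
        (⨅ β : X, Real.sqrt (∫ y, dist y β ^ 2 ∂(μ : Measure X))) - ε
          ≤ Real.sqrt (∫ x, dist x α ^ 2 ∂(ν : Measure M)) := by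
      intro α
      have h1 : (⨅ β : X, Real.sqrt (∫ y, dist y β ^ 2 ∂(μ : Measure X)))
          ≤ Real.sqrt (∫ y, dist y (g α) ^ 2 ∂(μ : Measure X)) := ciInf_le (bbX μ) _
      have hvα : Integrable (fun y : X => dist (y : M) α) (μ : Measure X) :=
        aux_integrable_of_bdd _ ((continuous_subtype_val.dist
          continuous_const).aestronglyMeasurable) (C := Cm) fun y => by
            rw [Real.norm_eq_abs, abs_of_nonneg dist_nonneg]; exact hCm _ _
      have hvα2 : Integrable (fun y : X => dist (y : M) α ^ 2) (μ : Measure X) :=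
        aux_integrable_of_bdd _ (((continuous_subtype_val.dist
          continuous_const).pow 2).aestronglyMeasurable) (C := Cm ^ 2) fun y => by
            rw [Real.norm_eq_abs, abs_of_nonneg (by positivity)]
            exact pow_le_pow_left₀ dist_nonneg (hCm _ _) 2
      have h2 : Real.sqrt (∫ y, dist y (g α) ^ 2 ∂(μ : Measure X))
          ≤ Real.sqrt (∫ y : X, dist (y : M) α ^ 2 ∂(μ : Measure X)) + ε := by
        refine aux_sqrt_int_le _ (intX _ _) hvα hvα2 (fun y => dist_nonneg)
          (fun y => dist_nonneg) hε fun y => ?_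
        rw [Subtype.dist_eq]
        have := dist_triangle (y : M) α (g α : M)
        linarith [hgd α]
      rw [hmap α]
      linarith
    have h3 : (⨅ β : X, Real.sqrt (∫ y, dist y β ^ 2 ∂(μ : Measure X))) - ε
        ≤ ⨅ α : M, Real.sqrt (∫ x, dist x α ^ 2 ∂(ν : Measure M)) := le_ciInf key
    have h4 : (⨅ α : M, Real.sqrt (∫ x, dist x α ^ 2 ∂(ν : Measure M))) ≤ SM :=
      le_ciSup bddM ν
    linarith
  rw [abs_sub_le_iff]
  constructor <;> linarith
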